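/- Let α > γ > 0, σ ≥ μ > 0 and fix λ > 0. Then the function β ↦ δ₂(β, λ) is strictly increasing on the interval (σ/γ, +∞), where δ₂(β, λ) = (1/(2λ))·(−μλ + βα b_β − σλ + βγ a_β + √((μλ − βα b_β + σλ − βγ a_β)² − 4(μσλ² − βα b_β σλ − βγ a_β μλ))). -/

import Mathlib

/-- The positive constant solution component `a_β`. -/
noncomputable def aβ (μ σ α γ β : ℝ) : ℝ := (β * α - μ) * σ / (β ^ 2 * α * γ - μ * σ)

/-- The positive constant solution component `b_β`. -/
noncomputable def bβ (μ σ α γ β : ℝ) : ℝ := (β * γ - σ) * μ / (β ^ 2 * α * γ - μ * σ)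

/-- The smaller eigenvalue `δ₁(β, λ)` of the matrix `D(β, λ)` (times λ). -/
noncomputable def delta₁ (μ σ α γ β lam : ℝ) : ℝ :=
  (1 / (2 * lam)) * (-(μ * lam) + β * α * bβ μ σ α γ β - σ * lam + β * γ * aβ μ σ α γ β -
    Real.sqrt ((μ * lam - β * α * bβ μ σ α γ β + σ * lam - β * γ * aβ μ σ α γ β) ^ 2 -
      4 * (μ * σ * lam ^ 2 - β * α * bβ μ σ α γ β * σ * lam -
        β * γ * aβ μ σ α γ β * μ * lam)))

/-- The larger eigenvalue `δ₂(β, λ)` of the matrix `D(β, λ)` (times λ). -/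
noncomputable def delta₂ (μ σ α γ β lam : ℝ) : ℝ :=
  (1 / (2 * lam)) * (-(μ * lam) + β * α * bβ μ σ α γ β - σ * lam + β * γ * aβ μ σ α γ β +
    Real.sqrt ((μ * lam - β * α * bβ μ σ α γ β + σ * lam - β * γ * aβ μ σ α γ β) ^ 2 -
      4 * (μ * σ * lam ^ 2 - β * α * bβ μ σ α γ β * σ * lam -
        β * γ * aβ μ σ α γ β * μ * lam)))

/-- Basic facts about `x = λ·δ₂(β,λ)` for `β > σ/γ`: with `A = βγ·a_β > 0`,
`B = βα·b_β > 0`, we have `x + μλ - B > 0`, `x + σλ - A > 0`, and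
`(x + μλ - B)(x + σλ - A) = A·B`. -/
lemma delta2_perBeta (μ σ α γ lam β : ℝ) (hαγ : γ < α) (hγ : 0 < γ) (hμσ : μ ≤ σ)
    (hμ : 0 < μ) (hlam : 0 < lam) (hβ : σ / γ < β) :
    0 < β * γ * aβ μ σ α γ β ∧ 0 < β * α * bβ μ σ α γ β ∧
    0 < lam * delta₂ μ σ α γ β lam + μ * lam - β * α * bβ μ σ α γ β ∧
    0 < lam * delta₂ μ σ α γ β lam + σ * lam - β * γ * aβ μ σ α γ β ∧
    (lam * delta₂ μ σ α γ β lam + μ * lam - β * α * bβ μ σ α γ β) *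
      (lam * delta₂ μ σ α γ β lam + σ * lam - β * γ * aβ μ σ α γ β) =
      (β * γ * aβ μ σ α γ β) * (β * α * bβ μ σ α γ β) := by
  have hσ : 0 < σ := lt_of_lt_of_le hμ hμσ
  have hβ0 : 0 < β := lt_trans (div_pos hσ hγ) hβ
  have hγβ : σ < γ * β := by rw [mul_comm]; exact (div_lt_iff₀ hγ).mp hβ
  have hαβ : σ < α * β := by nlinarith
  have hD : 0 < β ^ 2 * α * γ - μ * σ := by nlinarith [mul_lt_mul'' hγβ hαβ hσ.le hσ.le]
  have hAv : 0 < β * γ * aβ μ σ α γ β := by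
    have h1 : 0 < (β * α - μ) * σ := by nlinarith
    unfold aβ
    exact mul_pos (mul_pos hβ0 hγ) (div_pos h1 hD)
  have hBv : 0 < β * α * bβ μ σ α γ β := by
    have h1 : 0 < (β * γ - σ) * μ := by nlinarith
    unfold bβ
    exact mul_pos (mul_pos hβ0 (lt_trans hγ hαγ)) (div_pos h1 hD)
  set Av := β * γ * aβ μ σ α γ β with hAvdef
  set Bv := β * α * bβ μ σ α γ β with hBvdef
  have harg : (μ * lam - Bv + σ * lam - Av) ^ 2 -
      4 * (μ * σ * lam ^ 2 - Bv * σ * lam - Av * μ * lam) =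
      ((μ * lam - Bv) - (σ * lam - Av)) ^ 2 + 4 * (Av * Bv) := by ring
  set R := Real.sqrt (((μ * lam - Bv) - (σ * lam - Av)) ^ 2 + 4 * (Av * Bv)) with hRdef
  have hargnn : 0 ≤ ((μ * lam - Bv) - (σ * lam - Av)) ^ 2 + 4 * (Av * Bv) := by
    have := mul_pos hAv hBv
    nlinarith [sq_nonneg ((μ * lam - Bv) - (σ * lam - Av))]
  have hR2 : R ^ 2 = ((μ * lam - Bv) - (σ * lam - Av)) ^ 2 + 4 * (Av * Bv) :=
    Real.sq_sqrt hargnn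
  have hR0 : 0 ≤ R := Real.sqrt_nonneg _
  have hx : lam * delta₂ μ σ α γ β lam =
      (-(μ * lam - Bv) - (σ * lam - Av) + R) / 2 := by
    rw [delta₂, harg, ← hRdef, ← hAvdef, ← hBvdef]
    field_simp
    ring
  have hAB : 0 < Av * Bv := mul_pos hAv hBv
  have hu : 0 < (-(μ * lam - Bv) - (σ * lam - Av) + R) / 2 + μ * lam - Bv := by
    nlinarith [hR2, hR0, hAB]
  have hv : 0 < (-(μ * lam - Bv) - (σ * lam - Av) + R) / 2 + σ * lam - Av := by
    nlinarith [hR2, hR0, hAB]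
  have hprod : ((-(μ * lam - Bv) - (σ * lam - Av) + R) / 2 + μ * lam - Bv) *
      ((-(μ * lam - Bv) - (σ * lam - Av) + R) / 2 + σ * lam - Av) = Av * Bv := by
    linear_combination hR2 / 4
  rw [hx]
  exact ⟨hAv, hBv, hu, hv, hprod⟩

/-- Abstract two-point comparison step. -/
lemma delta2_core (α γ μ σ lam A₁ B₁ A₂ B₂ x₁ rA rB d : ℝ)
    (hγ : 0 < γ) (hαγ : γ < α) (hμ : 0 < μ) (hμσ : μ ≤ σ) (hlam : 0 < lam)
    (hA₁ : 0 < A₁) (hB₁ : 0 < B₁)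
    (hw : 0 < x₁ + μ * lam - B₁) (hz : 0 < x₁ + σ * lam - A₁)
    (hprod : (x₁ + μ * lam - B₁) * (x₁ + σ * lam - A₁) = A₁ * B₁)
    (hd : 0 < d)
    (hdA : d * (A₂ - A₁) = γ * σ * μ * rA) (hdB : d * (B₂ - B₁) = α * μ * σ * rB)
    (hrB : 0 < rB) (hM : 0 < γ * rA + α * rB) :
    (x₁ + μ * lam - B₂) * (x₁ + σ * lam - A₂) < A₂ * B₂ := by
  set P := x₁ + μ * lam with hP
  set Q := x₁ + σ * lam with hQdef
  have hα : 0 < α := lt_trans hγ hαγ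
  have hQ : 0 < Q := by nlinarith
  have hzB : B₁ ≤ Q - A₁ := by
    have hfac : (Q - A₁ - B₁) * (Q - A₁ + A₁) = (Q - A₁) * ((σ - μ) * lam) := by
      linear_combination hprod
    nlinarith [mul_nonneg hz.le (mul_nonneg (sub_nonneg.2 hμσ) hlam.le)]
  have hPQ : P * (Q - A₁) = B₁ * Q := by linear_combination hprod
  have hS : 0 < γ * rA * P + α * rB * Q := by
    have hid : (Q - A₁) * (γ * rA * P + α * rB * Q) =
        Q * (B₁ * (γ * rA + α * rB) + α * rB * ((Q - A₁) - B₁)) := by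
      linear_combination (γ * rA) * hPQ
    have hE : 0 < B₁ * (γ * rA + α * rB) + α * rB * ((Q - A₁) - B₁) := by
      have h1 : 0 ≤ α * rB * ((Q - A₁) - B₁) :=
        mul_nonneg (mul_nonneg hα.le hrB.le) (by linarith)
      nlinarith [mul_pos hB₁ hM]
    nlinarith [mul_pos hQ hE, hid, hz]
  have hstar : 0 < (A₂ - A₁) * P + (B₂ - B₁) * Q := by
    have h2 : d * ((A₂ - A₁) * P + (B₂ - B₁) * Q) =
        μ * σ * (γ * rA * P + α * rB * Q) := by
      linear_combination P * hdA + Q * hdB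
    nlinarith [mul_pos (mul_pos hμ (lt_of_lt_of_le hμ hμσ)) hS, h2, hd]
  nlinarith [hprod, hstar]


lemma delta2_rB_pos (μ σ α γ β₁ β₂ : ℝ) (hαγ : γ < α) (hγ : 0 < γ) (hμσ : μ ≤ σ)
    (hμ : 0 < μ) (hγβ₁ : σ < γ * β₁) (hγβ₂ : σ < γ * β₂) (hb₂ : 0 < β₂) :
    0 < α * γ * β₁ * β₂ - γ * μ * (β₁ + β₂) + μ * σ := by
  have h1 : 0 < γ * β₁ - μ := by linarith
  have h2 : 0 < α * β₂ - μ := by nlinarith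
  nlinarith [mul_pos h1 h2, mul_pos hμ (mul_pos (sub_pos.2 hαγ) hb₂),
    mul_nonneg hμ.le (sub_nonneg.2 hμσ)]

lemma delta2_M_pos (μ σ α γ β₁ β₂ : ℝ) (hαγ : γ < α) (hγ : 0 < γ) (hμσ : μ ≤ σ)
    (hμ : 0 < μ) (hγβ₁ : σ < γ * β₁) (hγβ₂ : σ < γ * β₂) :
    0 < γ * (α * γ * β₁ * β₂ - α * σ * (β₁ + β₂) + μ * σ) +
        α * (α * γ * β₁ * β₂ - γ * μ * (β₁ + β₂) + μ * σ) := by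
  have hσ : 0 < σ := lt_of_lt_of_le hμ hμσ
  have hα : 0 < α := lt_trans hγ hαγ
  have hασγμ : 0 < α * σ - γ * μ := by nlinarith
  have hid : γ ^ 2 * (γ * (α * γ * β₁ * β₂ - α * σ * (β₁ + β₂) + μ * σ) +
        α * (α * γ * β₁ * β₂ - γ * μ * (β₁ + β₂) + μ * σ)) =
      γ * σ * (α - γ) * (α * σ - γ * μ) +
      α * γ * (α * σ - γ * μ) * ((γ * β₁ - σ) + (γ * β₂ - σ)) +
      α * γ * (α + γ) * ((γ * β₁ - σ) * (γ * β₂ - σ)) := by ring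
  nlinarith [hid, mul_pos (mul_pos (mul_pos hγ hσ) (sub_pos.2 hαγ)) hασγμ,
    mul_pos (mul_pos (mul_pos hα hγ) hασγμ)
      (by linarith : (0:ℝ) < (γ * β₁ - σ) + (γ * β₂ - σ)),
    mul_pos (mul_pos (mul_pos hα hγ) (by linarith : (0:ℝ) < α + γ))
      (mul_pos (by linarith : (0:ℝ) < γ * β₁ - σ) (by linarith : (0:ℝ) < γ * β₂ - σ)),
    mul_pos hγ hγ]


lemma delta2_final (u v A₂ B₂ x₁ x₂ : ℝ)
    (hkey : (x₁ + u - B₂) * (x₁ + v - A₂) < A₂ * B₂)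
    (hw₂ : 0 < x₂ + u - B₂) (hz₂ : 0 < x₂ + v - A₂)
    (hprod₂ : (x₂ + u - B₂) * (x₂ + v - A₂) = A₂ * B₂) :
    x₁ < x₂ := by
  by_contra hcon
  push_neg at hcon
  nlinarith [mul_nonneg (sub_nonneg.2 hcon)
    (by linarith : (0:ℝ) ≤ (x₁ + u - B₂) + (x₂ + v - A₂))]

set_option maxHeartbeats 1000000 in
/-- For α > γ > 0, σ ≥ μ > 0 and fixed λ > 0, the map β ↦ δ₂(β, λ)
is strictly increasing on (σ/γ, ∞). -/
theorem delta2_strictMonoOn_beta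
    (μ σ α γ lam : ℝ) (hαγ : γ < α) (hγ : 0 < γ) (hμσ : μ ≤ σ) (hμ : 0 < μ)
    (hlam : 0 < lam) :
    StrictMonoOn (fun β : ℝ => delta₂ μ σ α γ β lam) (Set.Ioi (σ / γ)) := by
  intro β₁ hβ₁ β₂ hβ₂ h12
  simp only [Set.mem_Ioi] at hβ₁ hβ₂
  have hσ : 0 < σ := lt_of_lt_of_le hμ hμσ
  have hα : 0 < α := lt_trans hγ hαγ
  have hb₁ : 0 < β₁ := lt_trans (div_pos hσ hγ) hβ₁
  have hb₂ : 0 < β₂ := lt_trans (div_pos hσ hγ) hβ₂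
  have hγβ₁ : σ < γ * β₁ := by rw [mul_comm]; exact (div_lt_iff₀ hγ).mp hβ₁
  have hγβ₂ : σ < γ * β₂ := by rw [mul_comm]; exact (div_lt_iff₀ hγ).mp hβ₂
  have hαβ₁ : σ < α * β₁ := by nlinarith
  have hαβ₂ : σ < α * β₂ := by nlinarith
  have hD₁ : 0 < β₁ ^ 2 * α * γ - μ * σ := by
    nlinarith [mul_lt_mul'' hγβ₁ hαβ₁ hσ.le hσ.le]
  have hD₂ : 0 < β₂ ^ 2 * α * γ - μ * σ := by
    nlinarith [mul_lt_mul'' hγβ₂ hαβ₂ hσ.le hσ.le]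
  obtain ⟨hA₁, hB₁, hw₁, hz₁, hprod₁⟩ :=
    delta2_perBeta μ σ α γ lam β₁ hαγ hγ hμσ hμ hlam hβ₁
  obtain ⟨hA₂, hB₂, hw₂, hz₂, hprod₂⟩ :=
    delta2_perBeta μ σ α γ lam β₂ hαγ hγ hμσ hμ hlam hβ₂
  set A₁ := β₁ * γ * aβ μ σ α γ β₁
  set B₁ := β₁ * α * bβ μ σ α γ β₁
  set A₂ := β₂ * γ * aβ μ σ α γ β₂
  set B₂ := β₂ * α * bβ μ σ α γ β₂
  set x₁ := lam * delta₂ μ σ α γ β₁ lam with hx₁def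
  set x₂ := lam * delta₂ μ σ α γ β₂ lam with hx₂def
  set d := (β₁ ^ 2 * α * γ - μ * σ) * (β₂ ^ 2 * α * γ - μ * σ) with hddef
  have hd : 0 < d := mul_pos hD₁ hD₂
  set rA := (β₂ - β₁) * (α * γ * β₁ * β₂ - α * σ * (β₁ + β₂) + μ * σ) with hrAdef
  set rB := (β₂ - β₁) * (α * γ * β₁ * β₂ - γ * μ * (β₁ + β₂) + μ * σ) with hrBdef
  have hdA : d * (A₂ - A₁) = γ * σ * μ * rA := by
    rw [hddef, hrAdef]
    unfold A₁ A₂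
    unfold aβ
    field_simp [hD₁.ne', hD₂.ne', show α * γ * β₂ ^ 2 - μ * σ ≠ 0 by nlinarith, show α * γ * β₁ ^ 2 - μ * σ ≠ 0 by nlinarith]
    ring
  have hdB : d * (B₂ - B₁) = α * μ * σ * rB := by
    rw [hddef, hrBdef]
    unfold B₁ B₂
    unfold bβ
    field_simp [hD₁.ne', hD₂.ne', show α * γ * β₂ ^ 2 - μ * σ ≠ 0 by nlinarith, show α * γ * β₁ ^ 2 - μ * σ ≠ 0 by nlinarith]
    ring
  have hrB : 0 < rB := by
    rw [hrBdef]
    exact mul_pos (by linarith)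
      (delta2_rB_pos μ σ α γ β₁ β₂ hαγ hγ hμσ hμ hγβ₁ hγβ₂ hb₂)
  have hM : 0 < γ * rA + α * rB := by
    have hfact : γ * rA + α * rB = (β₂ - β₁) *
        (γ * (α * γ * β₁ * β₂ - α * σ * (β₁ + β₂) + μ * σ) +
         α * (α * γ * β₁ * β₂ - γ * μ * (β₁ + β₂) + μ * σ)) := by
      rw [hrAdef, hrBdef]; ring
    rw [hfact]
    exact mul_pos (by linarith) (delta2_M_pos μ σ α γ β₁ β₂ hαγ hγ hμσ hμ hγβ₁ hγβ₂)
  have hkey : (x₁ + μ * lam - B₂) * (x₁ + σ * lam - A₂) < A₂ * B₂ :=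
    delta2_core α γ μ σ lam A₁ B₁ A₂ B₂ x₁ rA rB d hγ hαγ hμ hμσ hlam hA₁ hB₁
      hw₁ hz₁ hprod₁ hd hdA hdB hrB hM
  have hx12 : x₁ < x₂ :=
    delta2_final (μ * lam) (σ * lam) A₂ B₂ x₁ x₂ hkey hw₂ hz₂ hprod₂
  have := (mul_lt_mul_iff_right₀ hlam).mp hx12
  simpa using this
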